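/- arXiv:2307.00076 — 3 statements merged into one kernel-verified Lean document; each statement's English description precedes it below -/
import Mathlib

section
/- Let R be a semiperfect ring with 1 = e₁ + ⋯ + e_ℓ for orthogonal idempotents e₁, …, e_ℓ such that each e_iRe_i is a local ring, and let A be an R-module whose lattice of submodules is distributive. Then for each i, the set e_iA is a uniserial e_iRe_i-module, i.e., its e_iRe_i-submodules are linearly ordered by inclusion. -/
/-- The "corner" set `eRe` of a ring `R` at an idempotent `e`. -/
def corner {R : Type*} [Ring R] (e : R) : Set R := {x : R | e * x * e = x}

/-- A left ideal of the corner ring `eRe` (with identity `e`). -/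
def IsCornerLeftIdeal {R : Type*} [Ring R] (e : R) (I : Set R) : Prop :=
  I ⊆ corner e ∧ (0 : R) ∈ I ∧ (∀ x ∈ I, ∀ y ∈ I, x + y ∈ I) ∧
    ∀ r ∈ corner e, ∀ x ∈ I, r * x ∈ I

/-- `I` is a maximal left ideal of the corner ring `eRe`. -/
def IsCornerMaximalLeftIdeal {R : Type*} [Ring R] (e : R) (I : Set R) : Prop :=
  IsCornerLeftIdeal e I ∧ I ≠ corner e ∧
    ∀ I' : Set R, IsCornerLeftIdeal e I' → I ⊆ I' → I' = I ∨ I' = corner e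

/-- The corner ring `eRe` is local: it has a unique maximal left ideal. -/
def IsLocalCorner {R : Type*} [Ring R] (e : R) : Prop :=
  ∃! I : Set R, IsCornerMaximalLeftIdeal e I

section Aux

variable {R : Type*} [Ring R] {e : R}

lemma mem_corner_iff {x : R} : x ∈ corner e ↔ e * x * e = x := Iff.rfl

lemma e_mem_corner (he : e * e = e) : e ∈ corner e := by
  show e * e * e = e; rw [he, he]

lemma corner_mul_left (he : e * e = e) {x : R} (hx : x ∈ corner e) : e * x = x := by
  conv_lhs => rw [← hx]
  simp only [← mul_assoc]
  rw [he]; exact hx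

lemma corner_mul_right (he : e * e = e) {x : R} (hx : x ∈ corner e) : x * e = x := by
  conv_lhs => rw [← hx]
  rw [mul_assoc, mul_assoc, he, ← mul_assoc]; exact hx

lemma corner_mul (he : e * e = e) {p q : R} (hp : p ∈ corner e) (hq : q ∈ corner e) :
    p * q ∈ corner e := by
  show e * (p * q) * e = p * q
  rw [← mul_assoc, corner_mul_left he hp, mul_assoc, corner_mul_right he hq]

lemma corner_zero : (0 : R) ∈ corner e := by show e * 0 * e = 0; simp

lemma corner_add {p q : R} (hp : p ∈ corner e) (hq : q ∈ corner e) :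
    p + q ∈ corner e := by
  show e * (p + q) * e = p + q
  rw [mul_add, add_mul, hp, hq]

lemma corner_sub {p q : R} (hp : p ∈ corner e) (hq : q ∈ corner e) :
    p - q ∈ corner e := by
  show e * (p - q) * e = p - q
  rw [mul_sub, sub_mul, hp, hq]

lemma corner_ere (he : e * e = e) (r : R) : e * r * e ∈ corner e := by
  show e * (e * r * e) * e = e * r * e
  simp only [← mul_assoc]; rw [he, mul_assoc, mul_assoc, he, ← mul_assoc]

/-- The left ideal of the corner generated by `a`. -/
def Lgen (e a : R) : Set R := {x | ∃ r : R, x = (e * r * e) * a}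

lemma Lgen_isIdeal (he : e * e = e) {a : R} (ha : a ∈ corner e) :
    IsCornerLeftIdeal e (Lgen e a) := by
  refine ⟨?_, ⟨0, by simp⟩, ?_, ?_⟩
  · rintro x ⟨r, rfl⟩
    exact corner_mul he (corner_ere he r) ha
  · rintro x ⟨r, rfl⟩ y ⟨r', rfl⟩
    exact ⟨r + r', by noncomm_ring⟩
  · rintro s hs x ⟨r, rfl⟩
    refine ⟨s * (e * r * e), ?_⟩
    have hc : s * (e * r * e) ∈ corner e := corner_mul he hs (corner_ere he r)
    rw [hc]
    noncomm_ring

lemma mem_Lgen_self (he : e * e = e) {a : R} (ha : a ∈ corner e) : a ∈ Lgen e a :=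
  ⟨e, by rw [he, he, corner_mul_left he ha]⟩

lemma ideal_eq_corner_of_e_mem (he : e * e = e) {I : Set R}
    (hI : IsCornerLeftIdeal e I) (heI : e ∈ I) : I = corner e := by
  obtain ⟨hsub, -, -, hmul⟩ := hI
  apply Set.Subset.antisymm hsub
  intro x hx
  have := hmul x hx e heI
  rwa [corner_mul_right he hx] at this

/-- Every proper corner left ideal is contained in a maximal one. -/
lemma exists_maximal (he : e * e = e) {I : Set R} (hI : IsCornerLeftIdeal e I)
    (hne : e ∉ I) : ∃ M, I ⊆ M ∧ IsCornerMaximalLeftIdeal e M := by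
  have hZ : ∀ c ⊆ {J : Set R | IsCornerLeftIdeal e J ∧ e ∉ J}, IsChain (· ⊆ ·) c →
      c.Nonempty → ∃ ub ∈ {J : Set R | IsCornerLeftIdeal e J ∧ e ∉ J}, ∀ s ∈ c, s ⊆ ub := by
    intro c hcS hchain hcne
    have h1 : ⋃₀ c ⊆ corner e := by
      rintro x ⟨J, hJ, hxJ⟩
      exact (hcS hJ).1.1 hxJ
    have h2 : (0 : R) ∈ ⋃₀ c := by
      obtain ⟨J, hJ⟩ := hcne
      exact ⟨J, hJ, (hcS hJ).1.2.1⟩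
    have h3 : ∀ x ∈ ⋃₀ c, ∀ y ∈ ⋃₀ c, x + y ∈ ⋃₀ c := by
      rintro x ⟨J, hJ, hxJ⟩ y ⟨J', hJ', hyJ'⟩
      rcases hchain.total hJ hJ' with h | h
      · exact ⟨J', hJ', (hcS hJ').1.2.2.1 x (h hxJ) y hyJ'⟩
      · exact ⟨J, hJ, (hcS hJ).1.2.2.1 x hxJ y (h hyJ')⟩
    have h4 : ∀ r ∈ corner e, ∀ x ∈ ⋃₀ c, r * x ∈ ⋃₀ c := by
      rintro r hr x ⟨J, hJ, hxJ⟩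
      exact ⟨J, hJ, (hcS hJ).1.2.2.2 r hr x hxJ⟩
    have h5 : e ∉ ⋃₀ c := by
      rintro ⟨J, hJ, heJ⟩
      exact (hcS hJ).2 heJ
    exact ⟨⋃₀ c, ⟨⟨h1, h2, h3, h4⟩, h5⟩, fun s hs => Set.subset_sUnion_of_mem hs⟩
  obtain ⟨M, hIM, hMmem⟩ := zorn_subset_nonempty
    {J | IsCornerLeftIdeal e J ∧ e ∉ J} hZ I ⟨hI, hne⟩
  refine ⟨M, hIM, hMmem.1.1, ?_, ?_⟩
  · intro h
    exact hMmem.1.2 (h ▸ e_mem_corner he)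
  · intro I' hI' hMI'
    by_cases he' : e ∈ I'
    · exact Or.inr (ideal_eq_corner_of_e_mem he hI' he')
    · exact Or.inl (Set.Subset.antisymm (hMmem.2 ⟨hI', he'⟩ hMI') hMI')

/-- In a local corner ring, one of two elements summing to `e` is left invertible. -/
lemma local_cover (he : e * e = e) (hloc : IsLocalCorner e) {a b : R}
    (ha : a ∈ corner e) (hb : b ∈ corner e) (hab : a + b = e) :
    (∃ u : R, (e * u * e) * a = e) ∨ (∃ u : R, (e * u * e) * b = e) := by
  by_contra h
  push_neg at h
  obtain ⟨h1, h2⟩ := h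
  have hea : e ∉ Lgen e a := by rintro ⟨r, hr⟩; exact h1 r hr.symm
  have heb : e ∉ Lgen e b := by rintro ⟨r, hr⟩; exact h2 r hr.symm
  obtain ⟨Ma, hIMa, hMa⟩ := exists_maximal he (Lgen_isIdeal he ha) hea
  obtain ⟨Mb, hIMb, hMb⟩ := exists_maximal he (Lgen_isIdeal he hb) heb
  obtain ⟨J, hJ, hJuniq⟩ := hloc
  have e1 : Ma = J := hJuniq Ma hMa
  have e2 : Mb = J := hJuniq Mb hMb
  have haJ : a ∈ J := e1 ▸ hIMa (mem_Lgen_self he ha)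
  have hbJ : b ∈ J := e2 ▸ hIMb (mem_Lgen_self he hb)
  have heJ : e ∈ J := hab ▸ hJ.1.2.2.1 a haJ b hbJ
  exact hJ.2.1 (ideal_eq_corner_of_e_mem he hJ.1 heJ)

end Aux

section Key

variable {R A : Type*} [Ring R] [AddCommGroup A] [Module R A]

/-- From distributivity: for any `x y` there is `s` with `s•y ∈ Rx` and `(1-s)•x ∈ Ry`. -/
lemma distrib_split (hdistrib : ∀ X Y Z : Submodule R A, X ⊓ (Y ⊔ Z) = (X ⊓ Y) ⊔ (X ⊓ Z))
    (x y : A) : ∃ s r r' : R, s • y = r • x ∧ x - s • x = r' • y := by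
  set P := Submodule.span R {x + y}
  set X := Submodule.span R {x}
  set Y := Submodule.span R {y}
  have hmem : x + y ∈ P ⊓ (X ⊔ Y) := by
    refine ⟨Submodule.mem_span_singleton_self _, ?_⟩
    exact Submodule.add_mem_sup (Submodule.mem_span_singleton_self x)
      (Submodule.mem_span_singleton_self y)
  rw [hdistrib] at hmem
  obtain ⟨a, haPX, b, hbPY, hab⟩ := Submodule.mem_sup.1 hmem
  obtain ⟨s, hs⟩ := Submodule.mem_span_singleton.1 haPX.1
  obtain ⟨t, ht⟩ := Submodule.mem_span_singleton.1 haPX.2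
  obtain ⟨u, hu⟩ := Submodule.mem_span_singleton.1 hbPY.2
  have hsxy : s • x + s • y = t • x := by rw [← smul_add, hs, ht]
  refine ⟨s, t - s, u + s - 1, ?_, ?_⟩
  · rw [sub_smul]
    exact eq_sub_of_add_eq' hsxy
  · rw [sub_smul, add_smul, one_smul]
    have hb' : u • y = x + y - (s • x + s • y) := by
      rw [← smul_add, hs, hu]
      exact eq_sub_of_add_eq' hab
    rw [hb']
    abel

/-- Element-level uniserial property of `eA`. -/
lemma corner_elem_comparable {e : R} (he : e * e = e) (hloc : IsLocalCorner e)
    (hdistrib : ∀ X Y Z : Submodule R A, X ⊓ (Y ⊔ Z) = (X ⊓ Y) ⊔ (X ⊓ Z))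
    {x y : A} (hx : e • x = x) (hy : e • y = y) :
    (∃ c : R, y = (e * c * e) • x) ∨ (∃ c : R, x = (e * c * e) • y) := by
  obtain ⟨s, r, r', h1, h2⟩ := distrib_split hdistrib x y
  set a := e * s * e with ha_def
  set b := e - a with hb_def
  have ha : a ∈ corner e := corner_ere he s
  have hb : b ∈ corner e := corner_sub (e_mem_corner he) ha
  have hab : a + b = e := by rw [hb_def]; abel
  -- a • y ∈ corner-span of x
  have hay : a • y = (e * r * e) • x := by
    rw [ha_def]
    simp only [mul_smul, hy, h1, hx]
  have hbx : b • x = (e * r' * e) • y := by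
    have hstep : b • x = e • (x - s • x) := by
      rw [hb_def, sub_smul, smul_sub, ha_def]
      simp only [mul_smul, hx]
    rw [hstep, h2]
    simp only [mul_smul, hy]
  rcases local_cover he hloc ha hb hab with ⟨u, hu⟩ | ⟨u, hu⟩
  · left
    have hc : (e * u * e) * (e * r * e) ∈ corner e :=
      corner_mul he (corner_ere he u) (corner_ere he r)
    refine ⟨(e * u * e) * (e * r * e), ?_⟩
    rw [hc]
    conv_lhs => rw [← hy, ← hu]
    rw [mul_smul (e * u * e) a y, hay, ← mul_smul]
  · right
    have hc : (e * u * e) * (e * r' * e) ∈ corner e :=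
      corner_mul he (corner_ere he u) (corner_ere he r')
    refine ⟨(e * u * e) * (e * r' * e), ?_⟩
    rw [hc]
    conv_lhs => rw [← hx, ← hu]
    rw [mul_smul (e * u * e) b x, hbx, ← mul_smul]

end Key

/-- An `e_iRe_i`-submodule of `e_iA`: a subset of `A` consisting of elements fixed by
`e_i`, containing `0`, closed under addition and under the action of `e_i r e_i`. -/
def IsCornerSubmodule {R A : Type*} [Ring R] [AddCommGroup A] [Module R A]
    (e : R) (N : Set A) : Prop :=
  (0 : A) ∈ N ∧ (∀ x ∈ N, e • x = x) ∧ (∀ x ∈ N, ∀ y ∈ N, x + y ∈ N) ∧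
    ∀ r : R, ∀ x ∈ N, (e * r * e) • x ∈ N

/-- Let `R` be semiperfect, with `1 = e₁ + ⋯ + e_ℓ` for orthogonal idempotents whose
corner rings `e_iRe_i` are local, and let `A` be a distributive `R`-module. Then each
`e_iA` is a uniserial `e_iRe_i`-module: its submodules are linearly ordered by
inclusion. -/
theorem corner_uniserial_of_distributive {R A : Type*} [Ring R] [AddCommGroup A]
    [Module R A] (ℓ : ℕ) (e : Fin ℓ → R)
    (hidem : ∀ i, e i * e i = e i)
    (horth : ∀ i j, i ≠ j → e i * e j = 0)
    (hsum : ∑ i, e i = 1)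
    (hlocal : ∀ i, IsLocalCorner (e i))
    (hdistrib : ∀ X Y Z : Submodule R A, X ⊓ (Y ⊔ Z) = (X ⊓ Y) ⊔ (X ⊓ Z)) :
    ∀ i, ∀ N M : Set A, IsCornerSubmodule (e i) N → IsCornerSubmodule (e i) M →
      N ⊆ M ∨ M ⊆ N := by
  intro i N M hN hM
  by_cases hNM : N ⊆ M
  · exact Or.inl hNM
  · right
    obtain ⟨x, hxN, hxM⟩ := Set.not_subset.1 hNM
    intro y hyM
    have hex : e i • x = x := hN.2.1 x hxN
    have hey : e i • y = y := hM.2.1 y hyM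
    rcases corner_elem_comparable (hidem i) (hlocal i) hdistrib hex hey with
      ⟨c, hc⟩ | ⟨c, hc⟩
    · rw [hc]
      exact hN.2.2.2 c x hxN
    · exact absurd (hc ▸ hM.2.2.2 c y hyM) hxM
end

section
/- Let R be a finite local ring whose Jacobson radical J is its unique maximal left ideal, let A be a distributive R-module, and suppose for x, y ∈ A that the cyclic submodules Rx and Ry are incomparable under inclusion. Then the module (Rx+Ry)/(Jx+Jy) is isomorphic to (R/J)², which is not a distributive module; hence in a distributive module over a local ring, the set of cyclic submodules {Rx : x ∈ A} is linearly ordered by inclusion, i.e., A is uniserial. -/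
private lemma left_inv_of_not_mem' {R : Type*} [Ring R]
    (J : Ideal R) (hJmax : ∀ I : Ideal R, I ≠ ⊤ → I ≤ J)
    {r : R} (hr : r ∉ J) : ∃ s : R, s * r = 1 := by
  have htop : Ideal.span {r} = ⊤ := by
    by_contra h
    exact hr (hJmax _ h (Ideal.subset_span rfl))
  have h1 : (1 : R) ∈ Ideal.span {r} := htop ▸ Submodule.mem_top
  obtain ⟨s, hs⟩ := Submodule.mem_span_singleton.mp h1
  exact ⟨s, by simpa [smul_eq_mul] using hs⟩

private theorem part1 {R A : Type*} [Ring R]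
    [AddCommGroup A] [Module R A]
    (J : Ideal R) (hJmax : ∀ I : Ideal R, I ≠ ⊤ → I ≤ J)
    (x y : A)
    (hxy : ¬ Submodule.span R {x} ≤ Submodule.span R {y})
    (hyx : ¬ Submodule.span R {y} ≤ Submodule.span R {x}) :
    Nonempty
      (((Submodule.span R {x} ⊔ Submodule.span R {y} : Submodule R A) ⧸
          (Submodule.map (LinearMap.toSpanSingleton R A x) J ⊔
            Submodule.map (LinearMap.toSpanSingleton R A y) J).comap
            (Submodule.span R {x} ⊔ Submodule.span R {y} : Submodule R A).subtype)
        ≃ₗ[R] ((R ⧸ J) × (R ⧸ J))) := by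
  set S : Submodule R A := Submodule.span R {x} ⊔ Submodule.span R {y} with hS
  set W : Submodule R A := Submodule.map (LinearMap.toSpanSingleton R A x) J ⊔
      Submodule.map (LinearMap.toSpanSingleton R A y) J with hW
  set T : Submodule R S := W.comap S.subtype with hT
  -- the map φ' : R × R → A
  set φ' : R × R →ₗ[R] A :=
    (LinearMap.toSpanSingleton R A x).coprod (LinearMap.toSpanSingleton R A y) with hφ'
  have hφ'apply : ∀ p : R × R, φ' p = p.1 • x + p.2 • y := fun p => rfl
  have hmemS : ∀ p : R × R, φ' p ∈ S := by
    intro p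
    exact Submodule.add_mem _
      (Submodule.mem_sup_left (Submodule.smul_mem _ _ (Submodule.mem_span_singleton_self x)))
      (Submodule.mem_sup_right (Submodule.smul_mem _ _ (Submodule.mem_span_singleton_self y)))
  set φ : R × R →ₗ[R] S := φ'.codRestrict S hmemS with hφ
  set g : R × R →ₗ[R] S ⧸ T := T.mkQ.comp φ with hg
  -- g is surjective
  have hφsurj : Function.Surjective φ := by
    rintro ⟨v, hv⟩
    rw [hS, Submodule.mem_sup] at hv
    obtain ⟨u1, h1, u2, h2, h12⟩ := hv
    obtain ⟨a, ha⟩ := Submodule.mem_span_singleton.mp h1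
    obtain ⟨b, hb⟩ := Submodule.mem_span_singleton.mp h2
    exact ⟨(a, b), by apply Subtype.ext; simp [hφ, LinearMap.codRestrict, hφ'apply, ha, hb, h12]⟩
  have hgsurj : Function.Surjective g := (Submodule.mkQ_surjective T).comp hφsurj
  -- kernel of g = J.prod J
  have hker : LinearMap.ker g = Submodule.prod J J := by
    ext ⟨a, b⟩
    simp only [LinearMap.mem_ker, hg, LinearMap.comp_apply, Submodule.mkQ_apply,
      Submodule.Quotient.mk_eq_zero, Submodule.mem_prod]
    constructor
    · intro hmem
      have hmem' : φ' (a, b) ∈ W := hmem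
      rw [hW, Submodule.mem_sup] at hmem'
      obtain ⟨u1, h1, u2, h2, h12⟩ := hmem'
      obtain ⟨c, hcJ, hc⟩ := h1
      obtain ⟨d, hdJ, hd⟩ := h2
      simp only [LinearMap.toSpanSingleton_apply] at hc hd
      rw [hφ'apply] at h12
      -- a•x + b•y = c•x + d•y
      have heq : a • x + b • y = c • x + d • y := by rw [← hc, ← hd] at h12; exact h12.symm
      have key : (a - c) • x = (d - b) • y := by
        rw [sub_smul, sub_smul, sub_eq_sub_iff_add_eq_add, heq]
        abel
      constructor
      · by_contra haJ
        have hacJ : a - c ∉ J := fun hcmem => haJ (by simpa using J.add_mem hcmem hcJ)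
        obtain ⟨s, hs⟩ := left_inv_of_not_mem' J hJmax hacJ
        have : x ∈ Submodule.span R {y} := by
          have : x = s • ((a - c) • x) := by rw [smul_smul, hs, one_smul]
          rw [this, key, smul_smul]
          exact Submodule.smul_mem _ _ (Submodule.mem_span_singleton_self y)
        exact hxy (by rwa [Submodule.span_singleton_le_iff_mem])
      · by_contra hbJ
        have hdbJ : d - b ∉ J := by
          intro hcmem
          apply hbJ
          have := J.sub_mem hdJ hcmem
          simpa using this
        obtain ⟨s, hs⟩ := left_inv_of_not_mem' J hJmax hdbJ
        have : y ∈ Submodule.span R {x} := by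
          have : y = s • ((d - b) • y) := by rw [smul_smul, hs, one_smul]
          rw [this, ← key, smul_smul]
          exact Submodule.smul_mem _ _ (Submodule.mem_span_singleton_self x)
        exact hyx (by rwa [Submodule.span_singleton_le_iff_mem])
    · rintro ⟨haJ, hbJ⟩
      show φ' (a, b) ∈ W
      rw [hφ'apply, hW]
      exact Submodule.add_mem _
        (Submodule.mem_sup_left ⟨a, haJ, rfl⟩)
        (Submodule.mem_sup_right ⟨b, hbJ, rfl⟩)
  -- the map f : R × R → (R⧸J) × (R⧸J)
  set f : R × R →ₗ[R] (R ⧸ J) × (R ⧸ J) := J.mkQ.prodMap J.mkQ with hf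
  have hfsurj : Function.Surjective f :=
    Function.Surjective.prodMap (Submodule.mkQ_surjective J) (Submodule.mkQ_surjective J)
  have hfker : LinearMap.ker f = Submodule.prod J J := by
    ext ⟨a, b⟩
    simp [hf, Prod.ext_iff, Submodule.Quotient.mk_eq_zero]
  exact ⟨((g.quotKerEquivOfSurjective hgsurj).symm.trans
      (Submodule.quotEquivOfEq _ _ (hker.trans hfker.symm))).trans
    (f.quotKerEquivOfSurjective hfsurj)⟩


private theorem part2 {R : Type*} [Ring R]
    (J : Ideal R) (hJne : J ≠ ⊤) :
    ¬ ∀ X Y Z : Submodule R ((R ⧸ J) × (R ⧸ J)),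
        X ⊓ (Y ⊔ Z) = (X ⊓ Y) ⊔ (X ⊓ Z) := by
  intro h
  set e1 : (R ⧸ J) × (R ⧸ J) := (Submodule.Quotient.mk 1, 0) with he1
  set e2 : (R ⧸ J) × (R ⧸ J) := (0, Submodule.Quotient.mk 1) with he2
  set d : (R ⧸ J) × (R ⧸ J) := (Submodule.Quotient.mk 1, Submodule.Quotient.mk 1) with hd
  have h1ne : (Submodule.Quotient.mk 1 : R ⧸ J) ≠ 0 := by
    intro hc
    rw [Submodule.Quotient.mk_eq_zero] at hc
    exact hJne (J.eq_top_iff_one.mpr hc)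
  have key := h (Submodule.span R {d}) (Submodule.span R {e1}) (Submodule.span R {e2})
  have hdmem : d ∈ Submodule.span R {d} ⊓ (Submodule.span R {e1} ⊔ Submodule.span R {e2}) := by
    refine ⟨Submodule.mem_span_singleton_self _, ?_⟩
    have : d = e1 + e2 := by simp [hd, he1, he2, Prod.ext_iff]
    rw [this]
    exact Submodule.add_mem_sup (Submodule.mem_span_singleton_self e1)
      (Submodule.mem_span_singleton_self e2)
  rw [key] at hdmem
  -- show both intersections are ⊥
  have hXY : Submodule.span R {d} ⊓ Submodule.span R {e1} = ⊥ := by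
    rw [eq_bot_iff]
    rintro w ⟨hw1, hw2⟩
    obtain ⟨r, hr⟩ := Submodule.mem_span_singleton.mp hw1
    obtain ⟨s, hs⟩ := Submodule.mem_span_singleton.mp hw2
    -- r • d = s • e1, second coords: r • 1 = 0 in R⧸J
    have h2 : r • (Submodule.Quotient.mk 1 : R ⧸ J) = 0 := by
      have := hr.trans hs.symm
      have := congrArg Prod.snd this
      simpa [hd, he1] using this
    have hrJ : r ∈ J := by
      rw [← Submodule.Quotient.mk_smul, smul_eq_mul, mul_one,
        Submodule.Quotient.mk_eq_zero] at h2
      exact h2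
    have : w = 0 := by
      rw [← hr, hd, Prod.smul_mk, ← Submodule.Quotient.mk_smul, smul_eq_mul, mul_one]
      simp [Submodule.Quotient.mk_eq_zero, hrJ, Prod.ext_iff]
    simp [this]
  have hXZ : Submodule.span R {d} ⊓ Submodule.span R {e2} = ⊥ := by
    rw [eq_bot_iff]
    rintro w ⟨hw1, hw2⟩
    obtain ⟨r, hr⟩ := Submodule.mem_span_singleton.mp hw1
    obtain ⟨s, hs⟩ := Submodule.mem_span_singleton.mp hw2
    have h2 : r • (Submodule.Quotient.mk 1 : R ⧸ J) = 0 := by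
      have := hr.trans hs.symm
      have := congrArg Prod.fst this
      simpa [hd, he2] using this
    have hrJ : r ∈ J := by
      rw [← Submodule.Quotient.mk_smul, smul_eq_mul, mul_one,
        Submodule.Quotient.mk_eq_zero] at h2
      exact h2
    have : w = 0 := by
      rw [← hr, hd, Prod.smul_mk, ← Submodule.Quotient.mk_smul, smul_eq_mul, mul_one]
      simp [Submodule.Quotient.mk_eq_zero, hrJ, Prod.ext_iff]
    simp [this]
  rw [hXY, hXZ, sup_idem, Submodule.mem_bot] at hdmem
  exact h1ne (by simpa [hd, Prod.ext_iff] using hdmem)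


private lemma left_inv_of_not_mem {R : Type*} [Ring R]
    (J : Ideal R) (hJmax : ∀ I : Ideal R, I ≠ ⊤ → I ≤ J)
    {r : R} (hr : r ∉ J) : ∃ s : R, s * r = 1 := by
  have htop : Ideal.span {r} = ⊤ := by
    by_contra h
    exact hr (hJmax _ h (Ideal.subset_span rfl))
  have h1 : (1 : R) ∈ Ideal.span {r} := htop ▸ Submodule.mem_top
  obtain ⟨s, hs⟩ := Submodule.mem_span_singleton.mp h1
  exact ⟨s, by simpa [smul_eq_mul] using hs⟩

private theorem part3 {R A : Type*} [Ring R]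
    [AddCommGroup A] [Module R A]
    (J : Ideal R) (hJne : J ≠ ⊤) (hJmax : ∀ I : Ideal R, I ≠ ⊤ → I ≤ J)
    (h : ∀ X Y Z : Submodule R A, X ⊓ (Y ⊔ Z) = (X ⊓ Y) ⊔ (X ⊓ Z))
    (x y : A) : Submodule.span R {x} ≤ Submodule.span R {y} ∨
        Submodule.span R {y} ≤ Submodule.span R {x} := by
  have key := h (Submodule.span R {x + y}) (Submodule.span R {x}) (Submodule.span R {y})
  have hmem : x + y ∈ Submodule.span R {x + y} ⊓ (Submodule.span R {x} ⊔ Submodule.span R {y}) :=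
    ⟨Submodule.mem_span_singleton_self _,
      Submodule.add_mem_sup (Submodule.mem_span_singleton_self x)
        (Submodule.mem_span_singleton_self y)⟩
  rw [key] at hmem
  obtain ⟨u, hu, v, hv, huv⟩ := Submodule.mem_sup.mp hmem
  obtain ⟨hua, hux⟩ := hu
  obtain ⟨hvb, hvy⟩ := hv
  obtain ⟨a, ha⟩ := Submodule.mem_span_singleton.mp hua
  obtain ⟨b, hb⟩ := Submodule.mem_span_singleton.mp hvb
  by_cases haJ : a ∈ J
  · by_cases hbJ : b ∈ J
    · -- 1 - (a+b) not in J, so x + y = 0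
      have hnot : (1 : R) - (a + b) ∉ J := by
        intro hc
        exact hJne (J.eq_top_iff_one.mpr (by
          have := J.add_mem hc (J.add_mem haJ hbJ)
          simpa using this))
      obtain ⟨s, hs⟩ := left_inv_of_not_mem J hJmax hnot
      have hz : ((1 : R) - (a + b)) • (x + y) = 0 := by
        rw [sub_smul, add_smul, one_smul, ha, hb, huv]
        abel
      have hxy0 : x + y = 0 := by
        have := congrArg (fun t => s • t) hz
        simpa [smul_smul, hs] using this
      right
      rw [Submodule.span_singleton_le_iff_mem]
      have hyx : y = -x := by
        have := hxy0
        rw [add_eq_zero_iff_eq_neg] at this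
        rw [eq_neg_iff_add_eq_zero] at this ⊢
        rw [add_comm] at this; exact this
      rw [hyx]
      exact Submodule.neg_mem _ (Submodule.mem_span_singleton_self x)
    · -- b not in J : x + y = s•v ∈ span {y}, so x ∈ span {y}
      obtain ⟨s, hs⟩ := left_inv_of_not_mem J hJmax hbJ
      have hxy : x + y ∈ Submodule.span R {y} := by
        have : x + y = s • v := by rw [← hb, smul_smul, hs, one_smul]
        rw [this]
        exact Submodule.smul_mem _ _ hvy
      left
      rw [Submodule.span_singleton_le_iff_mem]
      have : x = (x + y) - y := by abel
      rw [this]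
      exact Submodule.sub_mem _ hxy (Submodule.mem_span_singleton_self y)
  · obtain ⟨s, hs⟩ := left_inv_of_not_mem J hJmax haJ
    have hxy : x + y ∈ Submodule.span R {x} := by
      have : x + y = s • u := by rw [← ha, smul_smul, hs, one_smul]
      rw [this]
      exact Submodule.smul_mem _ _ hux
    right
    rw [Submodule.span_singleton_le_iff_mem]
    have : y = (x + y) - x := by abel
    rw [this]
    exact Submodule.sub_mem _ hxy (Submodule.mem_span_singleton_self x)



/-- Let `R` be a finite local ring (with unique maximal left ideal `J`) and let `A` be
an `R`-module. If the cyclic submodules `Rx` and `Ry` are incomparable, then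
`(Rx+Ry)/(Jx+Jy)` is isomorphic to `(R/J)²`, whose submodule lattice is not
distributive; hence if `A` is a distributive module, the cyclic submodules
`{Rx : x ∈ A}` are linearly ordered by inclusion, i.e. `A` is uniserial. -/
theorem cyclic_chain_of_distributive_local {R A : Type*} [Ring R] [Fintype R]
    [Nontrivial R] [AddCommGroup A] [Module R A]
    (J : Ideal R) (hJne : J ≠ ⊤) (hJmax : ∀ I : Ideal R, I ≠ ⊤ → I ≤ J) :
    (∀ x y : A,
      ¬ Submodule.span R {x} ≤ Submodule.span R {y} →
      ¬ Submodule.span R {y} ≤ Submodule.span R {x} →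
      Nonempty
        (((Submodule.span R {x} ⊔ Submodule.span R {y} : Submodule R A) ⧸
            (Submodule.map (LinearMap.toSpanSingleton R A x) J ⊔
              Submodule.map (LinearMap.toSpanSingleton R A y) J).comap
              (Submodule.span R {x} ⊔ Submodule.span R {y} : Submodule R A).subtype)
          ≃ₗ[R] ((R ⧸ J) × (R ⧸ J)))) ∧
    (¬ ∀ X Y Z : Submodule R ((R ⧸ J) × (R ⧸ J)),
        X ⊓ (Y ⊔ Z) = (X ⊓ Y) ⊔ (X ⊓ Z)) ∧
    ((∀ X Y Z : Submodule R A, X ⊓ (Y ⊔ Z) = (X ⊓ Y) ⊔ (X ⊓ Z)) →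
      ∀ x y : A, Submodule.span R {x} ≤ Submodule.span R {y} ∨
        Submodule.span R {y} ≤ Submodule.span R {x}) := by
  exact ⟨fun x y hxy hyx => part1 J hJmax x y hxy hyx, part2 J hJne,
    fun h x y => part3 J hJne hJmax h x y⟩
end

section
/- Let A be a module with submodule B, and let C be a clonoid from A/B to B containing the constant-0 function, where for f : A^k → A in Clo(A) (all term functions being linear/module term operations) and g : (A/B)^k → B, define f + g' : A^k → A by x ↦ f(x) + g(x + B^k). Then Clo(A) + C := { f + g' : f ∈ Clo(A)^(k), g ∈ C^(k), k ∈ ℕ } is a clone on A containing Clo(A), i.e., it contains all projections and is closed under composition. -/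
/-- A `k`-ary term function of a module: a linear combination of the variables. -/
def IsTermFun (R A : Type*) [Semiring R] [AddCommMonoid A] [Module R A]
    (k : ℕ) (t : (Fin k → A) → A) : Prop :=
  ∃ c : Fin k → R, ∀ x : Fin k → A, t x = ∑ i, c i • x i

/-- A clonoid from the module `A` (over `R`) to the module `B` (over `S`). -/
def IsClonoid (R A S B : Type*) [Semiring R] [AddCommMonoid A] [Module R A]
    [Semiring S] [AddCommMonoid B] [Module S B]
    (C : ∀ k : ℕ, Set ((Fin k → A) → B)) : Prop :=
  (∀ (k m : ℕ) (f : (Fin k → A) → B) (s : Fin k → (Fin m → A) → A),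
      f ∈ C k → (∀ i, IsTermFun R A m (s i)) →
      (fun x => f (fun i => s i x)) ∈ C m) ∧
  (∀ (k n : ℕ) (t : (Fin n → B) → B) (g : Fin n → (Fin k → A) → B),
      IsTermFun S B n t → (∀ i, g i ∈ C k) →
      (fun x => t (fun i => g i x)) ∈ C k)

/-- Let `A` be an `R`-module with submodule `B`, and let `C` be a clonoid from `A/B`
to `B` containing the constant-`0` functions. Then
`Clo(A) + C = { x ↦ Σᵢ cᵢ•xᵢ + g(x + Bᵏ) : c ∈ Rᵏ, g ∈ C⁽ᵏ⁾ }` is a clone on `A`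
containing `Clo(A)`: it contains all projections and all term functions of `A`, and
it is closed under composition. -/
theorem cloA_plus_clonoid_is_clone {R A : Type*} [Ring R] [AddCommGroup A]
    [Module R A] (B : Submodule R A)
    (C : ∀ k : ℕ, Set ((Fin k → A ⧸ B) → B))
    (hC : IsClonoid R (A ⧸ B) R B C)
    (h0 : ∀ k, (fun _ : Fin k → A ⧸ B => (0 : B)) ∈ C k)
    (D : ∀ k : ℕ, Set ((Fin k → A) → A))
    (hD : ∀ k, D k = {h | ∃ c : Fin k → R, ∃ g ∈ C k, ∀ x : Fin k → A,
      h x = ∑ i, c i • x i + (g (fun i => Submodule.Quotient.mk (x i)) : A)}) :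
    (∀ (k : ℕ) (i : Fin k), (fun x : Fin k → A => x i) ∈ D k) ∧
    (∀ (k : ℕ) (t : (Fin k → A) → A), IsTermFun R A k t → t ∈ D k) ∧
    (∀ (n k : ℕ) (h : (Fin n → A) → A) (h' : Fin n → (Fin k → A) → A),
      h ∈ D n → (∀ i, h' i ∈ D k) →
      (fun x => h (fun i => h' i x)) ∈ D k) := by

  refine ⟨?_, ?_, ?_⟩
  · intro k i
    rw [hD]
    refine ⟨Pi.single i 1, _, h0 k, fun x => ?_⟩
    simp [Pi.single_apply, ite_smul]
  · intro k t ⟨c, hc⟩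
    rw [hD]
    exact ⟨c, _, h0 k, fun x => by simp [hc x]⟩
  · intro n k h h' hh hh'
    simp only [hD, Set.mem_setOf_eq] at hh hh' ⊢
    obtain ⟨c, g, hg, hhe⟩ := hh
    choose d g' hg' hhe' using hh'
    set s : Fin n → (Fin k → A ⧸ B) → A ⧸ B := fun j y => ∑ i, d j i • y i with hs
    have hG1 : (fun y => g (fun j => s j y)) ∈ C k :=
      hC.1 n k g s hg (fun j => ⟨d j, fun y => rfl⟩)
    set gs : Fin (n + 1) → (Fin k → A ⧸ B) → B :=
      Fin.snoc g' (fun y => g (fun j => s j y)) with hgs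
    have hG2 : (fun y => ∑ i : Fin (n + 1), (Fin.snoc c 1 : Fin (n+1) → R) i • gs i y) ∈ C k := by
      have := hC.2 k (n + 1)
        (fun y : Fin (n+1) → B => ∑ i, (Fin.snoc c 1 : Fin (n+1) → R) i • y i) gs
        ⟨Fin.snoc c 1, fun y => rfl⟩ ?_
      · exact this
      · intro i
        refine Fin.lastCases ?_ ?_ i
        · simpa [hgs, Fin.snoc_last] using hG1
        · intro j; simpa [hgs, Fin.snoc_castSucc] using hg' j
    refine ⟨fun i => ∑ j, c j * d j i, _, hG2, fun x => ?_⟩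
    have hmk : ∀ j, (Submodule.Quotient.mk (h' j x) : A ⧸ B)
        = s j (fun i => Submodule.Quotient.mk (x i)) := by
      intro j
      rw [hhe' j x]
      simp only [hs, ← Submodule.mkQ_apply, map_add, map_sum, map_smul]
      simp [Submodule.Quotient.mk_eq_zero]
    rw [hhe]
    have h1 : ∀ j, c j • h' j x
        = c j • ∑ i, d j i • x i + c j • ((g' j fun i => Submodule.Quotient.mk (x i)) : A) := by
      intro j; rw [hhe' j x, smul_add]
    simp only [h1, Finset.sum_add_distrib]
    have h2 : ∑ j, c j • ∑ i, d j i • x i = ∑ i, (∑ j, c j * d j i) • x i := by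
      simp only [Finset.smul_sum, smul_smul]
      rw [Finset.sum_comm]
      simp [Finset.sum_smul]
    rw [h2]
    have h3 : ∀ y : Fin k → A ⧸ B,
        ((∑ i : Fin (n + 1), (Fin.snoc c 1 : Fin (n+1) → R) i • gs i y : B) : A)
        = ∑ j, c j • ((g' j y : A)) + (g (fun j => s j y) : A) := by
      intro y
      rw [Fin.sum_univ_castSucc]
      push_cast
      simp [hgs, Fin.snoc_castSucc, Fin.snoc_last]
    rw [h3]
    have h4 : (fun j => (Submodule.Quotient.mk (h' j x) : A ⧸ B))
        = fun j => s j (fun i => Submodule.Quotient.mk (x i)) := funext hmk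
    rw [h4, add_assoc]
end
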